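/- arXiv:1603.05576 — 3 statements merged into one kernel-verified Lean document; each statement's English description precedes it below -/
import Mathlib

section
/- (Rate computation for the Pangloss line AG.) Let d₁, d₂ ∈ (0, 1/2]. Let W, E₁, E₂, F₁, F₂ be jointly independent Boolean random variables with W uniform, E₁, E₂ ~ Bernoulli(d₂) and F₁, F₂ ~ Bernoulli(d₁). Define X' = W ⊕ E₁, Y' = W ⊕ E₂, X = X' ⊕ F₁, Y = Y' ⊕ F₂, and set a₁ = d₁(1−d₂) + d₂(1−d₁) and a₀ = 2a₁(1−a₁). Then X − X' − W − Y' − Y is a Markov chain and the mutual information (in nats) satisfies I[(X',Y') : (X,Y)] = I[(X,Y) : W] + I[X : X' | W] + I[Y : Y' | W] = ln 2 − 2h(d₁) + h(a₀), where h(p) = −p ln p − (1−p) ln(1−p). -/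
open MeasureTheory ProbabilityTheory

/-- Shannon entropy (in nats) of a finite-valued random variable `X` under `μ`. -/
noncomputable def measEnt {Ω α : Type*} [MeasurableSpace Ω] [Fintype α]
    (μ : Measure Ω) (X : Ω → α) : ℝ :=
  ∑ a : α, Real.negMulLog ((μ (X ⁻¹' {a})).toReal)

/-- Shannon mutual information `I[X : Y]` (in nats). -/
noncomputable def measMI {Ω α β : Type*} [MeasurableSpace Ω] [Fintype α] [Fintype β]
    (μ : Measure Ω) (X : Ω → α) (Y : Ω → β) : ℝ :=
  measEnt μ X + measEnt μ Y - measEnt μ (fun ω => (X ω, Y ω))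

/-- Conditional Shannon entropy `H[X | Y]` (in nats). -/
noncomputable def measCondEnt {Ω α β : Type*} [MeasurableSpace Ω] [Fintype α] [Fintype β]
    (μ : Measure Ω) (X : Ω → α) (Y : Ω → β) : ℝ :=
  measEnt μ (fun ω => (X ω, Y ω)) - measEnt μ Y

/-- Conditional Shannon mutual information `I[X : Y | Z]` (in nats). -/
noncomputable def measCondMI {Ω α β γ : Type*} [MeasurableSpace Ω] [Fintype α] [Fintype β]
    [Fintype γ] (μ : Measure Ω) (X : Ω → α) (Y : Ω → β) (Z : Ω → γ) : ℝ :=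
  measEnt μ (fun ω => (X ω, Z ω)) + measEnt μ (fun ω => (Y ω, Z ω)) -
    measEnt μ (fun ω => (X ω, Y ω, Z ω)) - measEnt μ Z

/-- The binary entropy function in nats. -/
noncomputable def binEnt (p : ℝ) : ℝ :=
  -(p * Real.log p) - (1 - p) * Real.log (1 - p)

/- ---------- auxiliary machinery ---------- -/

lemma pang_meas_pre_sum {Ω α : Type*} [MeasurableSpace Ω] [MeasurableSpace α]
    [Fintype α] [MeasurableSingletonClass α]
    (μ : Measure Ω) (f : Ω → α) (hf : Measurable f) (Q : α → Prop) [DecidablePred Q] :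
    μ {ω | Q (f ω)} = ∑ v : α, if Q v then μ (f ⁻¹' {v}) else 0 := by
  have hset : {ω | Q (f ω)} = ⋃ v ∈ Finset.univ.filter Q, f ⁻¹' {v} := by
    ext ω; simp
  rw [hset, measure_biUnion_finset]
  · rw [← Finset.sum_filter]
  · intro a _ b _ hab
    refine Set.disjoint_left.mpr fun ω h1 h2 => hab ?_
    simp only [Set.mem_preimage, Set.mem_singleton_iff] at h1 h2
    rw [← h1, ← h2]
  · exact fun b _ => hf (measurableSet_singleton b)

/-- Bernoulli point mass helper. -/
noncomputable def bp (d : ℝ) (b : Bool) : ℝ := if b then d else 1 - d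

lemma bp_nonneg {d : ℝ} (h0 : 0 ≤ d) (h1 : d ≤ 1) (b : Bool) : 0 ≤ bp d b := by
  cases b <;> simp [bp] <;> linarith

lemma binEnt_eq (p : ℝ) : binEnt p = Real.negMulLog p + Real.negMulLog (1 - p) := by
  simp only [binEnt, Real.negMulLog]; ring

lemma negMulLog_half : Real.negMulLog 2⁻¹ = 2⁻¹ * Real.log 2 := by
  simp [Real.negMulLog, Real.log_inv]

lemma negMulLog_two : Real.negMulLog 2 = -(2 * Real.log 2) := by
  simp [Real.negMulLog]

set_option maxHeartbeats 4000000 in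
/-- rate computation for the Pangloss line AG: with `W` uniform,
`E₁, E₂ ~ Ber(d₂)`, `F₁, F₂ ~ Ber(d₁)` jointly independent, `X' = W ⊕ E₁`, `Y' = W ⊕ E₂`,
`X = X' ⊕ F₁`, `Y = Y' ⊕ F₂`, `a₁ = d₁*d₂` and `a₀ = a₁*a₁` (crossover convolutions),
`X − X' − W − Y' − Y` is a Markov chain and
`I[(X',Y') : (X,Y)] = I[(X,Y) : W] + I[X : X' | W] + I[Y : Y' | W] = ln 2 − 2h(d₁) + h(a₀)`. -/
theorem pangloss_line_AG_rate {Ω : Type*} [MeasurableSpace Ω] (μ : Measure Ω)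
    [IsProbabilityMeasure μ] (d₁ d₂ : ℝ) (hd₁0 : 0 < d₁) (hd₁ : d₁ ≤ 1 / 2)
    (hd₂0 : 0 < d₂) (hd₂ : d₂ ≤ 1 / 2) (W E₁ E₂ F₁ F₂ : Ω → Bool)
    (hWm : Measurable W) (hE₁m : Measurable E₁) (hE₂m : Measurable E₂)
    (hF₁m : Measurable F₁) (hF₂m : Measurable F₂)
    (hindep : iIndepFun ![W, E₁, E₂, F₁, F₂] μ)
    (hW : μ (W ⁻¹' {true}) = 1 / 2)
    (hE₁ : μ (E₁ ⁻¹' {true}) = ENNReal.ofReal d₂)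
    (hE₂ : μ (E₂ ⁻¹' {true}) = ENNReal.ofReal d₂)
    (hF₁ : μ (F₁ ⁻¹' {true}) = ENNReal.ofReal d₁)
    (hF₂ : μ (F₂ ⁻¹' {true}) = ENNReal.ofReal d₁) :
    let X' : Ω → Bool := fun ω => xor (W ω) (E₁ ω)
    let Y' : Ω → Bool := fun ω => xor (W ω) (E₂ ω)
    let X : Ω → Bool := fun ω => xor (X' ω) (F₁ ω)
    let Y : Ω → Bool := fun ω => xor (Y' ω) (F₂ ω)
    let a₁ : ℝ := d₁ * (1 - d₂) + d₂ * (1 - d₁)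
    let a₀ : ℝ := 2 * a₁ * (1 - a₁)
    -- `X − X' − W − Y' − Y` is a Markov chain:
    (∀ x x' w y' y : Bool,
        μ {ω | X ω = x ∧ X' ω = x' ∧ W ω = w ∧ Y' ω = y' ∧ Y ω = y} *
            (μ {ω | X' ω = x'} * μ {ω | W ω = w} * μ {ω | Y' ω = y'}) =
          μ {ω | X ω = x ∧ X' ω = x'} * μ {ω | X' ω = x' ∧ W ω = w} *
            (μ {ω | W ω = w ∧ Y' ω = y'} * μ {ω | Y' ω = y' ∧ Y ω = y})) ∧
      measMI μ (fun ω => (X' ω, Y' ω)) (fun ω => (X ω, Y ω)) =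
        measMI μ (fun ω => (X ω, Y ω)) W + measCondMI μ X X' W + measCondMI μ Y Y' W ∧
      measMI μ (fun ω => (X' ω, Y' ω)) (fun ω => (X ω, Y ω)) =
        Real.log 2 - 2 * binEnt d₁ + binEnt a₀ := by
  intro X' Y' X Y a₁ a₀
  have ha₁def : a₁ = d₁ * (1 - d₂) + d₂ * (1 - d₁) := rfl
  have ha₀def : a₀ = 2 * a₁ * (1 - a₁) := rfl
  have hd₁1 : d₁ ≤ 1 := by linarith
  have hd₂1 : d₂ ≤ 1 := by linarith
  have hb1 : ∀ b, 0 ≤ bp d₁ b := bp_nonneg hd₁0.le hd₁1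
  have hb2 : ∀ b, 0 ≤ bp d₂ b := bp_nonneg hd₂0.le hd₂1
  -- marginals
  have hcompl : ∀ (G : Ω → Bool), G ⁻¹' {false} = (G ⁻¹' {true})ᶜ := by
    intro G; ext ω; simp
  have mW : ∀ b, μ (W ⁻¹' {b}) = ENNReal.ofReal 2⁻¹ := by
    intro b; cases b
    · rw [hcompl W, prob_compl_eq_one_sub (hWm (measurableSet_singleton true)), hW]
      rw [show ENNReal.ofReal 2⁻¹ = 2⁻¹ from by
        rw [ENNReal.ofReal_inv_of_pos (by norm_num)]; norm_num]
      rw [one_div, ENNReal.one_sub_inv_two]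
    · rw [hW, ENNReal.ofReal_inv_of_pos (by norm_num)]
      norm_num
  have mE₁ : ∀ b, μ (E₁ ⁻¹' {b}) = ENNReal.ofReal (bp d₂ b) := by
    intro b; cases b
    · rw [hcompl E₁, prob_compl_eq_one_sub (hE₁m (measurableSet_singleton true)), hE₁,
        show (bp d₂ false : ℝ) = 1 - d₂ from rfl, ENNReal.ofReal_sub _ hd₂0.le, ENNReal.ofReal_one]
    · rw [hE₁]; rfl
  have mE₂ : ∀ b, μ (E₂ ⁻¹' {b}) = ENNReal.ofReal (bp d₂ b) := by
    intro b; cases b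
    · rw [hcompl E₂, prob_compl_eq_one_sub (hE₂m (measurableSet_singleton true)), hE₂,
        show (bp d₂ false : ℝ) = 1 - d₂ from rfl, ENNReal.ofReal_sub _ hd₂0.le, ENNReal.ofReal_one]
    · rw [hE₂]; rfl
  have mF₁ : ∀ b, μ (F₁ ⁻¹' {b}) = ENNReal.ofReal (bp d₁ b) := by
    intro b; cases b
    · rw [hcompl F₁, prob_compl_eq_one_sub (hF₁m (measurableSet_singleton true)), hF₁,
        show (bp d₁ false : ℝ) = 1 - d₁ from rfl, ENNReal.ofReal_sub _ hd₁0.le, ENNReal.ofReal_one]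
    · rw [hF₁]; rfl
  have mF₂ : ∀ b, μ (F₂ ⁻¹' {b}) = ENNReal.ofReal (bp d₁ b) := by
    intro b; cases b
    · rw [hcompl F₂, prob_compl_eq_one_sub (hF₂m (measurableSet_singleton true)), hF₂,
        show (bp d₁ false : ℝ) = 1 - d₁ from rfl, ENNReal.ofReal_sub _ hd₁0.le, ENNReal.ofReal_one]
    · rw [hF₂]; rfl
  have hTm : Measurable (fun ω => (W ω, E₁ ω, E₂ ω, F₁ ω, F₂ ω)) :=
    hWm.prod (hE₁m.prod (hE₂m.prod (hF₁m.prod hF₂m)))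
  have atom : ∀ v : Bool × Bool × Bool × Bool × Bool,
      μ ((fun ω => (W ω, E₁ ω, E₂ ω, F₁ ω, F₂ ω)) ⁻¹' {v}) =
        μ (W ⁻¹' {v.1}) * μ (E₁ ⁻¹' {v.2.1}) * μ (E₂ ⁻¹' {v.2.2.1}) *
          μ (F₁ ⁻¹' {v.2.2.2.1}) * μ (F₂ ⁻¹' {v.2.2.2.2}) := by
    intro v
    have hset : (fun ω => (W ω, E₁ ω, E₂ ω, F₁ ω, F₂ ω)) ⁻¹' {v} =
        ⋂ i : Fin 5, (![W, E₁, E₂, F₁, F₂] i) ⁻¹' {![v.1, v.2.1, v.2.2.1, v.2.2.2.1, v.2.2.2.2] i} := by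
      ext ω
      simp [Set.mem_iInter, Fin.forall_fin_succ, Prod.ext_iff]
    rw [hset, hindep.meas_iInter (fun i => ⟨_, trivial, rfl⟩), Fin.prod_univ_five]
    simp
  have atomR : ∀ v : Bool × Bool × Bool × Bool × Bool,
      (μ ((fun ω => (W ω, E₁ ω, E₂ ω, F₁ ω, F₂ ω)) ⁻¹' {v})).toReal =
        2⁻¹ * bp d₂ v.2.1 * bp d₂ v.2.2.1 * bp d₁ v.2.2.2.1 * bp d₁ v.2.2.2.2 := by
    intro v
    rw [atom v, mW, mE₁, mE₂, mF₁, mF₂]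
    simp [ENNReal.toReal_mul, ENNReal.toReal_ofReal, hb1, hb2,
      ENNReal.toReal_ofReal (le_of_lt (by norm_num : (0:ℝ) < 2⁻¹))]
  have keyR : ∀ (Q : Bool × Bool × Bool × Bool × Bool → Prop) (_ : DecidablePred Q),
      (μ {ω | Q (W ω, E₁ ω, E₂ ω, F₁ ω, F₂ ω)}).toReal =
        ∑ v : Bool × Bool × Bool × Bool × Bool, if Q v then
          2⁻¹ * bp d₂ v.2.1 * bp d₂ v.2.2.1 * bp d₁ v.2.2.2.1 * bp d₁ v.2.2.2.2 else 0 := by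
    intro Q inst
    rw [pang_meas_pre_sum μ _ hTm Q, ENNReal.toReal_sum (fun v _ => by
      split <;> simp [measure_ne_top])]
    refine Finset.sum_congr rfl fun v _ => ?_
    split
    · exact atomR v
    · simp
  -- Markov family lemmas (set-builder form)
  have P5R : ∀ x x' w y' y : Bool,
      (μ {ω | X ω = x ∧ X' ω = x' ∧ W ω = w ∧ Y' ω = y' ∧ Y ω = y}).toReal =
        2⁻¹ * bp d₂ (xor w x') * bp d₂ (xor w y') * bp d₁ (xor x x') * bp d₁ (xor y y') := by
    intro x x' w y' y
    have hset : {ω | X ω = x ∧ X' ω = x' ∧ W ω = w ∧ Y' ω = y' ∧ Y ω = y} =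
        (fun ω => (W ω, E₁ ω, E₂ ω, F₁ ω, F₂ ω)) ⁻¹'
          {(w, xor w x', xor w y', xor x x', xor y y')} := by
      ext ω
      show (xor (xor (W ω) (E₁ ω)) (F₁ ω) = x ∧ xor (W ω) (E₁ ω) = x' ∧ W ω = w ∧
          xor (W ω) (E₂ ω) = y' ∧ xor (xor (W ω) (E₂ ω)) (F₂ ω) = y) ↔
        (W ω, E₁ ω, E₂ ω, F₁ ω, F₂ ω) = (w, xor w x', xor w y', xor x x', xor y y')
      generalize W ω = A
      generalize E₁ ω = B
      generalize E₂ ω = C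
      generalize F₁ ω = D
      generalize F₂ ω = G
      revert A B C D G x x' w y' y
      decide
    rw [hset, atomR]
  have PX'R : ∀ x' : Bool, (μ {ω | X' ω = x'}).toReal = 2⁻¹ := by
    intro x'
    refine (keyR (fun v => xor v.1 v.2.1 = x') inferInstance).trans ?_
    cases x' <;>
      · simp [Fintype.sum_prod_type, Fintype.sum_bool, bp]
        try ring
  have PWR : ∀ w : Bool, (μ {ω | W ω = w}).toReal = 2⁻¹ := by
    intro w
    refine (keyR (fun v => v.1 = w) inferInstance).trans ?_
    cases w <;>
      · simp [Fintype.sum_prod_type, Fintype.sum_bool, bp]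
        try ring
  have PY'R : ∀ y' : Bool, (μ {ω | Y' ω = y'}).toReal = 2⁻¹ := by
    intro y'
    refine (keyR (fun v => xor v.1 v.2.2.1 = y') inferInstance).trans ?_
    cases y' <;>
      · simp [Fintype.sum_prod_type, Fintype.sum_bool, bp]
        try ring
  have PXX'R : ∀ x x' : Bool, (μ {ω | X ω = x ∧ X' ω = x'}).toReal = 2⁻¹ * bp d₁ (xor x x') := by
    intro x x'
    refine (keyR (fun v => xor (xor v.1 v.2.1) v.2.2.2.1 = x ∧ xor v.1 v.2.1 = x') inferInstance).trans ?_
    cases x <;> cases x' <;>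
      · simp [Fintype.sum_prod_type, Fintype.sum_bool, bp]
        try ring
  have PX'WR : ∀ x' w : Bool, (μ {ω | X' ω = x' ∧ W ω = w}).toReal = 2⁻¹ * bp d₂ (xor w x') := by
    intro x' w
    refine (keyR (fun v => xor v.1 v.2.1 = x' ∧ v.1 = w) inferInstance).trans ?_
    cases x' <;> cases w <;>
      · simp [Fintype.sum_prod_type, Fintype.sum_bool, bp]
        try ring
  have PWY'R : ∀ w y' : Bool, (μ {ω | W ω = w ∧ Y' ω = y'}).toReal = 2⁻¹ * bp d₂ (xor w y') := by
    intro w y'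
    refine (keyR (fun v => v.1 = w ∧ xor v.1 v.2.2.1 = y') inferInstance).trans ?_
    cases w <;> cases y' <;>
      · simp [Fintype.sum_prod_type, Fintype.sum_bool, bp]
        try ring
  have PY'YR : ∀ y' y : Bool, (μ {ω | Y' ω = y' ∧ Y ω = y}).toReal = 2⁻¹ * bp d₁ (xor y y') := by
    intro y' y
    refine (keyR (fun v => xor v.1 v.2.2.1 = y' ∧ xor (xor v.1 v.2.2.1) v.2.2.2.2 = y) inferInstance).trans ?_
    cases y' <;> cases y <;>
      · simp [Fintype.sum_prod_type, Fintype.sum_bool, bp]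
        try ring
  -- entropy family lemmas (preimage form)
  have Eg1 : ∀ x' y' x y : Bool,
      (μ ((fun ω => ((X' ω, Y' ω), X ω, Y ω)) ⁻¹' {((x', y'), x, y)})).toReal =
        2⁻¹ * bp (2*d₂*(1-d₂)) (xor x' y') * bp d₁ (xor x x') * bp d₁ (xor y y') := by
    intro x' y' x y
    refine (keyR (fun v => ((xor v.1 v.2.1, xor v.1 v.2.2.1),
      xor (xor v.1 v.2.1) v.2.2.2.1, xor (xor v.1 v.2.2.1) v.2.2.2.2) = ((x', y'), x, y))
      inferInstance).trans ?_
    cases x' <;> cases y' <;> cases x <;> cases y <;>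
      · simp [Fintype.sum_prod_type, Fintype.sum_bool, bp]
        try ring
  have Eg2 : ∀ x' y' : Bool,
      (μ ((fun ω => (X' ω, Y' ω)) ⁻¹' {(x', y')})).toReal =
        2⁻¹ * bp (2*d₂*(1-d₂)) (xor x' y') := by
    intro x' y'
    refine (keyR (fun v => (xor v.1 v.2.1, xor v.1 v.2.2.1) = (x', y')) inferInstance).trans ?_
    cases x' <;> cases y' <;>
      · simp [Fintype.sum_prod_type, Fintype.sum_bool, bp]
        try ring
  have Eg3 : ∀ x y : Bool,
      (μ ((fun ω => (X ω, Y ω)) ⁻¹' {(x, y)})).toReal = 2⁻¹ * bp a₀ (xor x y) := by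
    intro x y
    refine (keyR (fun v => (xor (xor v.1 v.2.1) v.2.2.2.1, xor (xor v.1 v.2.2.1) v.2.2.2.2) = (x, y))
      inferInstance).trans ?_
    cases x <;> cases y <;>
      · simp [Fintype.sum_prod_type, Fintype.sum_bool, bp, ha₀def, ha₁def]
        try ring
  have Eg4 : ∀ b : Bool, (μ (W ⁻¹' {b})).toReal = 2⁻¹ := by
    intro b
    refine (keyR (fun v => v.1 = b) inferInstance).trans ?_
    cases b <;>
      · simp [Fintype.sum_prod_type, Fintype.sum_bool, bp]
        try ring
  have Eg5 : ∀ x y w : Bool,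
      (μ ((fun ω => ((X ω, Y ω), W ω)) ⁻¹' {((x, y), w)})).toReal =
        2⁻¹ * bp a₁ (xor x w) * bp a₁ (xor y w) := by
    intro x y w
    refine (keyR (fun v => ((xor (xor v.1 v.2.1) v.2.2.2.1, xor (xor v.1 v.2.2.1) v.2.2.2.2), v.1)
      = ((x, y), w)) inferInstance).trans ?_
    cases x <;> cases y <;> cases w <;>
      · simp [Fintype.sum_prod_type, Fintype.sum_bool, bp, ha₁def]
        try ring
  have Eg6 : ∀ x w : Bool,
      (μ ((fun ω => (X ω, W ω)) ⁻¹' {(x, w)})).toReal = 2⁻¹ * bp a₁ (xor x w) := by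
    intro x w
    refine (keyR (fun v => (xor (xor v.1 v.2.1) v.2.2.2.1, v.1) = (x, w)) inferInstance).trans ?_
    cases x <;> cases w <;>
      · simp [Fintype.sum_prod_type, Fintype.sum_bool, bp, ha₁def]
        try ring
  have Eg7 : ∀ x' w : Bool,
      (μ ((fun ω => (X' ω, W ω)) ⁻¹' {(x', w)})).toReal = 2⁻¹ * bp d₂ (xor w x') := by
    intro x' w
    refine (keyR (fun v => (xor v.1 v.2.1, v.1) = (x', w)) inferInstance).trans ?_
    cases x' <;> cases w <;>
      · simp [Fintype.sum_prod_type, Fintype.sum_bool, bp]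
        try ring
  have Eg8 : ∀ x x' w : Bool,
      (μ ((fun ω => (X ω, X' ω, W ω)) ⁻¹' {(x, x', w)})).toReal =
        2⁻¹ * bp d₂ (xor w x') * bp d₁ (xor x x') := by
    intro x x' w
    refine (keyR (fun v => (xor (xor v.1 v.2.1) v.2.2.2.1, xor v.1 v.2.1, v.1) = (x, x', w))
      inferInstance).trans ?_
    cases x <;> cases x' <;> cases w <;>
      · simp [Fintype.sum_prod_type, Fintype.sum_bool, bp]
        try ring
  have Eg9 : ∀ y w : Bool,
      (μ ((fun ω => (Y ω, W ω)) ⁻¹' {(y, w)})).toReal = 2⁻¹ * bp a₁ (xor y w) := by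
    intro y w
    refine (keyR (fun v => (xor (xor v.1 v.2.2.1) v.2.2.2.2, v.1) = (y, w)) inferInstance).trans ?_
    cases y <;> cases w <;>
      · simp [Fintype.sum_prod_type, Fintype.sum_bool, bp, ha₁def]
        try ring
  have Eg10 : ∀ y' w : Bool,
      (μ ((fun ω => (Y' ω, W ω)) ⁻¹' {(y', w)})).toReal = 2⁻¹ * bp d₂ (xor w y') := by
    intro y' w
    refine (keyR (fun v => (xor v.1 v.2.2.1, v.1) = (y', w)) inferInstance).trans ?_
    cases y' <;> cases w <;>
      · simp [Fintype.sum_prod_type, Fintype.sum_bool, bp]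
        try ring
  have Eg11 : ∀ y y' w : Bool,
      (μ ((fun ω => (Y ω, Y' ω, W ω)) ⁻¹' {(y, y', w)})).toReal =
        2⁻¹ * bp d₂ (xor w y') * bp d₁ (xor y y') := by
    intro y y' w
    refine (keyR (fun v => (xor (xor v.1 v.2.2.1) v.2.2.2.2, xor v.1 v.2.2.1, v.1) = (y, y', w))
      inferInstance).trans ?_
    cases y <;> cases y' <;> cases w <;>
      · simp [Fintype.sum_prod_type, Fintype.sum_bool, bp]
        try ring
  refine ⟨?_, ?_, ?_⟩
  · -- Markov chain
    intro x x' w y' y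
    have hne : ∀ s : Set Ω, μ s ≠ ⊤ := fun s => measure_ne_top μ s
    refine (ENNReal.toReal_eq_toReal_iff'
      (ENNReal.mul_ne_top (hne _) (ENNReal.mul_ne_top (ENNReal.mul_ne_top (hne _) (hne _)) (hne _)))
      (ENNReal.mul_ne_top (ENNReal.mul_ne_top (hne _) (hne _))
        (ENNReal.mul_ne_top (hne _) (hne _)))).mp ?_
    simp only [ENNReal.toReal_mul]
    rw [P5R, PX'R, PWR, PY'R, PXX'R, PX'WR, PWY'R, PY'YR]
    ring
  · -- chain rule decomposition
    simp only [measMI, measCondMI, measEnt, Fintype.sum_prod_type, Fintype.sum_bool]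
    simp only [Eg1, Eg2, Eg3, Eg4, Eg5, Eg6, Eg7, Eg8, Eg9, Eg10, Eg11]
    simp [bp]
    simp only [Real.negMulLog_mul]
    ring
  · -- closed form
    simp only [measMI, measEnt, Fintype.sum_prod_type, Fintype.sum_bool]
    simp only [Eg1, Eg2, Eg3, Eg4]
    simp [bp]
    rw [binEnt_eq, binEnt_eq]
    simp only [Real.negMulLog_mul, negMulLog_half, negMulLog_two]
    ring
end

section
/- (Rate triple for curve GB.) Let a₁ ∈ (0, 1/2) and r ∈ [0, 1/2]. Let W, Z₁, Z₂, G be jointly independent Boolean random variables with W uniform, Z₁, Z₂ ~ Bernoulli(a₁), G ~ Bernoulli(r). Define X = W ⊕ Z₁, Y = W ⊕ Z₂, W' = W ⊕ G, and set a₀ = 2a₁(1−a₁) and β = a₁(1−r) + r(1−a₁). Then (X,Y) − W − W' is a Markov chain and, in nats, I[(X,Y) : W'] = (1 − a₀)·( ln 2 − h( (β − a₀/2)/(1 − a₀) ) ) and H[X | W'] = H[Y | W'] = h(β), where h(p) = −p ln p − (1−p) ln(1−p). -/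
open MeasureTheory ProbabilityTheory

/-! ### Auxiliary material -/

abbrev B4 := Bool × Bool × Bool × Bool

/-- The atomic probability function for the four independent bits. -/
noncomputable def Pfun (a₁ r : ℝ) : B4 → ℝ := fun t =>
  (1 / 2) * (if t.2.1 then a₁ else 1 - a₁) * (if t.2.2.1 then a₁ else 1 - a₁) *
    (if t.2.2.2 then r else 1 - r)

lemma Pfun_nonneg {a₁ r : ℝ} (h1 : 0 ≤ a₁) (h2 : a₁ ≤ 1) (h3 : 0 ≤ r) (h4 : r ≤ 1)
    (t : B4) : 0 ≤ Pfun a₁ r t := by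
  unfold Pfun
  have : (0:ℝ) ≤ 1/2 := by norm_num
  apply mul_nonneg (mul_nonneg (mul_nonneg this _) _) _ <;> split <;> linarith

lemma measure_comp_eq_sum {Ω : Type*} [MeasurableSpace Ω] (μ : Measure Ω)
    {α : Type*} [Fintype α] [DecidableEq α]
    (T : Ω → B4) (hT : Measurable T) (f : B4 → α) (a : α) :
    μ ((fun ω => f (T ω)) ⁻¹' {a}) =
      ∑ t : B4, if f t = a then μ (T ⁻¹' {t}) else 0 := by
  classical
  have h1 : ((fun ω => f (T ω)) ⁻¹' {a}) =
      T ⁻¹' ↑(Finset.univ.filter fun t => f t = a) := by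
    ext ω; simp
  rw [h1, ← MeasureTheory.sum_measure_preimage_singleton _
    (fun t _ => hT (measurableSet_singleton t)), Finset.sum_filter]

lemma marg {Ω : Type*} [MeasurableSpace Ω] (μ : Measure Ω) [IsProbabilityMeasure μ]
    (f : Ω → Bool) (hf : Measurable f) (p : ℝ) (hp0 : 0 ≤ p)
    (h : μ (f ⁻¹' {true}) = ENNReal.ofReal p) :
    ∀ b, μ (f ⁻¹' {b}) = ENNReal.ofReal (if b then p else 1 - p) := by
  intro b; cases b
  · have hc : f ⁻¹' {false} = (f ⁻¹' {true})ᶜ := by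
      ext ω; simp
    rw [hc, measure_compl (hf (measurableSet_singleton _)) (measure_ne_top _ _),
      measure_univ, h, show (1:ENNReal) = ENNReal.ofReal 1 by simp,
      ← ENNReal.ofReal_sub _ hp0]
    simp
  · simpa using h

lemma condEnt_eval {b : ℝ} (hb0 : 0 < b) (hb1 : b < 1) :
    2 * Real.negMulLog ((1 - b) / 2) + 2 * Real.negMulLog (b / 2)
      - Real.log 2 = binEnt b := by
  unfold binEnt
  simp only [Real.negMulLog]
  rw [Real.log_div (by linarith) two_ne_zero, Real.log_div (ne_of_gt hb0) two_ne_zero]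
  ring

lemma mi_eval {a0 s0 s1 : ℝ} (ha0 : 0 < a0) (hs0 : 0 < s0) (hs1 : 0 < s1)
    (hsum : s0 + s1 = 1 - a0) :
    2 * Real.negMulLog ((1 - a0) / 2) + 2 * Real.negMulLog (a0 / 2) + Real.log 2 -
      (2 * Real.negMulLog (s0 / 2) + 2 * Real.negMulLog (s1 / 2)
        + 4 * Real.negMulLog (a0 / 4)) =
      (1 - a0) * (Real.log 2 - binEnt (s1 / (1 - a0))) := by
  have h1a0 : (0:ℝ) < 1 - a0 := by linarith
  have hc2 : 1 - s1 / (1 - a0) = s0 / (1 - a0) := by field_simp; linarith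
  unfold binEnt
  rw [hc2]
  simp only [Real.negMulLog]
  rw [Real.log_div (ne_of_gt h1a0) two_ne_zero, Real.log_div (ne_of_gt ha0) two_ne_zero,
    Real.log_div (ne_of_gt hs0) two_ne_zero, Real.log_div (ne_of_gt hs1) two_ne_zero,
    Real.log_div (ne_of_gt ha0) (by norm_num : (4:ℝ) ≠ 0),
    Real.log_div (ne_of_gt hs1) (ne_of_gt h1a0), Real.log_div (ne_of_gt hs0) (ne_of_gt h1a0),
    show (4:ℝ) = 2^2 by norm_num, Real.log_pow]
  push_cast
  field_simp
  linear_combination (Real.log (1 - a0) - Real.log 2) * hsum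

set_option maxHeartbeats 2000000 in
/-- rate triple for curve GB: with `W` uniform, `Z₁, Z₂ ~ Ber(a₁)`,
`G ~ Ber(r)` jointly independent, `X = W ⊕ Z₁`, `Y = W ⊕ Z₂`, `W' = W ⊕ G`,
`a₀ = 2a₁(1−a₁)` and `β = a₁*r`, the chain `(X,Y) − W − W'` is Markov and, in nats,
`I[(X,Y) : W'] = (1−a₀)(ln 2 − h((β − a₀/2)/(1 − a₀)))` and `H[X|W'] = H[Y|W'] = h(β)`. -/
theorem curve_GB_rate_triple {Ω : Type*} [MeasurableSpace Ω] (μ : Measure Ω)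
    [IsProbabilityMeasure μ] (a₁ r : ℝ) (ha₁0 : 0 < a₁) (ha₁ : a₁ < 1 / 2)
    (hr0 : 0 ≤ r) (hr : r ≤ 1 / 2) (W Z₁ Z₂ G : Ω → Bool)
    (hWm : Measurable W) (hZ₁m : Measurable Z₁) (hZ₂m : Measurable Z₂)
    (hGm : Measurable G)
    (hindep : iIndepFun ![W, Z₁, Z₂, G] μ)
    (hW : μ (W ⁻¹' {true}) = 1 / 2)
    (hZ₁ : μ (Z₁ ⁻¹' {true}) = ENNReal.ofReal a₁)
    (hZ₂ : μ (Z₂ ⁻¹' {true}) = ENNReal.ofReal a₁)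
    (hG : μ (G ⁻¹' {true}) = ENNReal.ofReal r) :
    let X : Ω → Bool := fun ω => xor (W ω) (Z₁ ω)
    let Y : Ω → Bool := fun ω => xor (W ω) (Z₂ ω)
    let W' : Ω → Bool := fun ω => xor (W ω) (G ω)
    let a₀ : ℝ := 2 * a₁ * (1 - a₁)
    let β : ℝ := a₁ * (1 - r) + r * (1 - a₁)
    -- `(X,Y) − W − W'` is a Markov chain:
    (∀ x y w w' : Bool,
        μ {ω | X ω = x ∧ Y ω = y ∧ W ω = w ∧ W' ω = w'} * μ {ω | W ω = w} =
          μ {ω | X ω = x ∧ Y ω = y ∧ W ω = w} * μ {ω | W ω = w ∧ W' ω = w'}) ∧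
      measMI μ (fun ω => (X ω, Y ω)) W' =
        (1 - a₀) * (Real.log 2 - binEnt ((β - a₀ / 2) / (1 - a₀))) ∧
      measCondEnt μ X W' = binEnt β ∧ measCondEnt μ Y W' = binEnt β := by
  intro X Y W' a₀ β
  classical
  have ha₁1 : a₁ ≤ 1 := by linarith
  have hr1 : r ≤ 1 := by linarith
  have hPnn : ∀ t : B4, 0 ≤ Pfun a₁ r t := Pfun_nonneg ha₁0.le ha₁1 hr0 hr1
  have hTm : Measurable (fun ω => (W ω, Z₁ ω, Z₂ ω, G ω) : Ω → B4) :=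
    hWm.prodMk (hZ₁m.prodMk (hZ₂m.prodMk hGm))
  -- marginals
  have hWmarg := marg μ W hWm (1/2) (by norm_num)
    (by rw [hW, ENNReal.ofReal_div_of_pos (by norm_num)]; norm_num)
  have hZ₁marg := marg μ Z₁ hZ₁m a₁ ha₁0.le hZ₁
  have hZ₂marg := marg μ Z₂ hZ₂m a₁ ha₁0.le hZ₂
  have hGmarg := marg μ G hGm r hr0 hG
  -- atoms
  have hatomE : ∀ t : B4,
      μ ((fun ω => (W ω, Z₁ ω, Z₂ ω, G ω)) ⁻¹' {t}) =
        μ (W ⁻¹' {t.1}) * μ (Z₁ ⁻¹' {t.2.1}) * μ (Z₂ ⁻¹' {t.2.2.1}) * μ (G ⁻¹' {t.2.2.2}) := by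
    intro t
    have h := hindep.measure_inter_preimage_eq_mul (S := Finset.univ)
      (sets := ![{t.1}, {t.2.1}, {t.2.2.1}, {t.2.2.2}])
      (fun i _ => by fin_cases i <;> exact measurableSet_singleton _)
    have hset : ((fun ω => (W ω, Z₁ ω, Z₂ ω, G ω)) ⁻¹' {t}) =
        ⋂ i ∈ Finset.univ, ![W, Z₁, Z₂, G] i ⁻¹' ![{t.1}, {t.2.1}, {t.2.2.1}, {t.2.2.2}] i := by
      ext ω
      simp [Fin.forall_fin_succ, Prod.ext_iff, and_assoc]
    rw [hset, h, Fin.prod_univ_four]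
    simp
  have hatom : ∀ t : B4,
      μ ((fun ω => (W ω, Z₁ ω, Z₂ ω, G ω)) ⁻¹' {t}) = ENNReal.ofReal (Pfun a₁ r t) := by
    intro t
    have hb : ∀ (p : ℝ), 0 ≤ p → p ≤ 1 → (0:ℝ) ≤ if (t.2.1) then p else 1 - p := by
      intro p h1 h2; split <;> linarith
    rw [hatomE t, hWmarg, hZ₁marg, hZ₂marg, hGmarg,
      ← ENNReal.ofReal_mul (by split <;> norm_num),
      ← ENNReal.ofReal_mul (by
        apply mul_nonneg (by split <;> norm_num) (by split <;> linarith)),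
      ← ENNReal.ofReal_mul (by
        apply mul_nonneg (mul_nonneg (by split <;> norm_num) (by split <;> linarith))
          (by split <;> linarith))]
    congr 1
    unfold Pfun
    cases t.1 <;> norm_num
  -- the master probability formula
  have hprob : ∀ {α : Type} [Fintype α] [DecidableEq α] (f : B4 → α) (a : α),
      μ ((fun ω => f (W ω, Z₁ ω, Z₂ ω, G ω)) ⁻¹' {a}) =
        ENNReal.ofReal (∑ t : B4, if f t = a then Pfun a₁ r t else 0) := by
    intro α _ _ f a
    rw [measure_comp_eq_sum μ _ hTm f a,
      ENNReal.ofReal_sum_of_nonneg (fun t _ => by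
        by_cases h : f t = a <;> simp [h, hPnn t])]
    refine Finset.sum_congr rfl fun t _ => ?_
    simp only [hatom t, apply_ite ENNReal.ofReal, ENNReal.ofReal_zero]
  have hsumnn : ∀ {α : Type} [Fintype α] [DecidableEq α] (f : B4 → α) (a : α),
      (0:ℝ) ≤ ∑ t : B4, if f t = a then Pfun a₁ r t else 0 := by
    intro α _ _ f a
    exact Finset.sum_nonneg fun t _ => by by_cases h : f t = a <;> simp [h, hPnn t]
  have hprobR : ∀ {α : Type} [Fintype α] [DecidableEq α] (f : B4 → α) (a : α),
      (μ ((fun ω => f (W ω, Z₁ ω, Z₂ ω, G ω)) ⁻¹' {a})).toReal =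
        ∑ t : B4, if f t = a then Pfun a₁ r t else 0 := by
    intro α _ _ f a
    rw [hprob f a, ENNReal.toReal_ofReal (hsumnn f a)]
  -- probability values for the events we need
  have pW' : ∀ b : Bool,
      (μ ((fun ω => xor (W ω) (G ω)) ⁻¹' {b})).toReal = 1/2 := by
    intro b
    have h := hprobR (fun t : B4 => xor t.1 t.2.2.2) b
    rw [show (μ ((fun ω => xor (W ω) (G ω)) ⁻¹' {b})).toReal =
      ∑ t : B4, if xor t.1 t.2.2.2 = b then Pfun a₁ r t else 0 from h]
    cases b <;> simp [Pfun, Fintype.sum_prod_type, Fintype.sum_bool] <;> ring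
  have pXY : ∀ x y : Bool,
      (μ ((fun ω => (xor (W ω) (Z₁ ω), xor (W ω) (Z₂ ω))) ⁻¹' {(x, y)})).toReal =
        if x = y then (1 - 2*a₁*(1-a₁))/2 else (2*a₁*(1-a₁))/2 := by
    intro x y
    have h := hprobR (fun t : B4 => (xor t.1 t.2.1, xor t.1 t.2.2.1)) (x, y)
    rw [show (μ ((fun ω => (xor (W ω) (Z₁ ω), xor (W ω) (Z₂ ω))) ⁻¹' {(x, y)})).toReal =
      ∑ t : B4, if (xor t.1 t.2.1, xor t.1 t.2.2.1) = (x, y) then Pfun a₁ r t else 0 from h]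
    cases x <;> cases y <;> simp [Pfun, Fintype.sum_prod_type, Fintype.sum_bool] <;> ring
  have pXYW' : ∀ x y w' : Bool,
      (μ ((fun ω => ((xor (W ω) (Z₁ ω), xor (W ω) (Z₂ ω)), xor (W ω) (G ω)))
          ⁻¹' {((x, y), w')})).toReal =
        if x = y then
          (if x = w' then ((1-r)*((1-a₁)*(1-a₁)) + r*(a₁*a₁))/2
            else ((1-r)*(a₁*a₁) + r*((1-a₁)*(1-a₁)))/2)
        else (2*a₁*(1-a₁))/4 := by
    intro x y w'
    have h := hprobR (fun t : B4 => ((xor t.1 t.2.1, xor t.1 t.2.2.1), xor t.1 t.2.2.2))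
      ((x, y), w')
    rw [show (μ ((fun ω => ((xor (W ω) (Z₁ ω), xor (W ω) (Z₂ ω)), xor (W ω) (G ω)))
        ⁻¹' {((x, y), w')})).toReal =
      ∑ t : B4, if ((xor t.1 t.2.1, xor t.1 t.2.2.1), xor t.1 t.2.2.2) = ((x, y), w')
        then Pfun a₁ r t else 0 from h]
    cases x <;> cases y <;> cases w' <;>
      simp [Pfun, Fintype.sum_prod_type, Fintype.sum_bool] <;> ring
  have pXW' : ∀ x w' : Bool,
      (μ ((fun ω => (xor (W ω) (Z₁ ω), xor (W ω) (G ω))) ⁻¹' {(x, w')})).toReal =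
        if x = w' then (1 - (a₁*(1-r)+r*(1-a₁)))/2 else (a₁*(1-r)+r*(1-a₁))/2 := by
    intro x w'
    have h := hprobR (fun t : B4 => (xor t.1 t.2.1, xor t.1 t.2.2.2)) (x, w')
    rw [show (μ ((fun ω => (xor (W ω) (Z₁ ω), xor (W ω) (G ω))) ⁻¹' {(x, w')})).toReal =
      ∑ t : B4, if (xor t.1 t.2.1, xor t.1 t.2.2.2) = (x, w') then Pfun a₁ r t else 0 from h]
    cases x <;> cases w' <;> simp [Pfun, Fintype.sum_prod_type, Fintype.sum_bool] <;> ring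
  have pYW' : ∀ x w' : Bool,
      (μ ((fun ω => (xor (W ω) (Z₂ ω), xor (W ω) (G ω))) ⁻¹' {(x, w')})).toReal =
        if x = w' then (1 - (a₁*(1-r)+r*(1-a₁)))/2 else (a₁*(1-r)+r*(1-a₁))/2 := by
    intro x w'
    have h := hprobR (fun t : B4 => (xor t.1 t.2.2.1, xor t.1 t.2.2.2)) (x, w')
    rw [show (μ ((fun ω => (xor (W ω) (Z₂ ω), xor (W ω) (G ω))) ⁻¹' {(x, w')})).toReal =
      ∑ t : B4, if (xor t.1 t.2.2.1, xor t.1 t.2.2.2) = (x, w') then Pfun a₁ r t else 0 from h]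
    cases x <;> cases w' <;> simp [Pfun, Fintype.sum_prod_type, Fintype.sum_bool] <;> ring
  -- entropies
  have hW'ent : measEnt μ (fun ω => xor (W ω) (G ω)) = Real.log 2 := by
    unfold measEnt
    rw [Fintype.sum_bool, pW' true, pW' false]
    simp only [Real.negMulLog]
    rw [show ((1:ℝ)/2) = 2⁻¹ by norm_num, Real.log_inv]
    ring
  have hXY : measEnt μ (fun ω => (xor (W ω) (Z₁ ω), xor (W ω) (Z₂ ω))) =
      2 * Real.negMulLog ((1 - 2*a₁*(1-a₁))/2) + 2 * Real.negMulLog ((2*a₁*(1-a₁))/2) := by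
    unfold measEnt
    rw [Fintype.sum_prod_type]
    simp only [Fintype.sum_bool]
    rw [pXY true true, pXY true false, pXY false true, pXY false false]
    norm_num
    ring
  have hXYW' : measEnt μ (fun ω => ((xor (W ω) (Z₁ ω), xor (W ω) (Z₂ ω)), xor (W ω) (G ω))) =
      2 * Real.negMulLog (((1-r)*((1-a₁)*(1-a₁)) + r*(a₁*a₁))/2) +
        2 * Real.negMulLog (((1-r)*(a₁*a₁) + r*((1-a₁)*(1-a₁)))/2) +
        4 * Real.negMulLog ((2*a₁*(1-a₁))/4) := by
    unfold measEnt
    rw [Fintype.sum_prod_type]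
    simp only [Fintype.sum_prod_type, Fintype.sum_bool]
    rw [pXYW' true true true, pXYW' true true false, pXYW' true false true,
      pXYW' true false false, pXYW' false true true, pXYW' false true false,
      pXYW' false false true, pXYW' false false false]
    norm_num
    ring
  have hXW' : measEnt μ (fun ω => (xor (W ω) (Z₁ ω), xor (W ω) (G ω))) =
      2 * Real.negMulLog ((1 - (a₁*(1-r)+r*(1-a₁)))/2) +
        2 * Real.negMulLog ((a₁*(1-r)+r*(1-a₁))/2) := by
    unfold measEnt
    rw [Fintype.sum_prod_type]
    simp only [Fintype.sum_bool]
    rw [pXW' true true, pXW' true false, pXW' false true, pXW' false false]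
    norm_num
    ring
  have hYW' : measEnt μ (fun ω => (xor (W ω) (Z₂ ω), xor (W ω) (G ω))) =
      2 * Real.negMulLog ((1 - (a₁*(1-r)+r*(1-a₁)))/2) +
        2 * Real.negMulLog ((a₁*(1-r)+r*(1-a₁))/2) := by
    unfold measEnt
    rw [Fintype.sum_prod_type]
    simp only [Fintype.sum_bool]
    rw [pYW' true true, pYW' true false, pYW' false true, pYW' false false]
    norm_num
    ring
  -- numeric facts
  have hβ0 : (0:ℝ) < a₁*(1-r)+r*(1-a₁) := by nlinarith
  have hβ1 : a₁*(1-r)+r*(1-a₁) < 1 := by nlinarith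
  have ha0pos : (0:ℝ) < 2*a₁*(1-a₁) := by nlinarith
  have hs0pos : (0:ℝ) < (1-r)*((1-a₁)*(1-a₁)) + r*(a₁*a₁) := by nlinarith
  have hs1pos : (0:ℝ) < (1-r)*(a₁*a₁) + r*((1-a₁)*(1-a₁)) := by nlinarith
  have hsum : ((1-r)*((1-a₁)*(1-a₁)) + r*(a₁*a₁)) + ((1-r)*(a₁*a₁) + r*((1-a₁)*(1-a₁)))
      = 1 - 2*a₁*(1-a₁) := by ring
  refine ⟨?_, ?_, ?_, ?_⟩
  · -- Markov chain
    intro x y w w'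
    show μ {ω | xor (W ω) (Z₁ ω) = x ∧ xor (W ω) (Z₂ ω) = y ∧ W ω = w ∧
            xor (W ω) (G ω) = w'} * μ {ω | W ω = w} =
        μ {ω | xor (W ω) (Z₁ ω) = x ∧ xor (W ω) (Z₂ ω) = y ∧ W ω = w} *
          μ {ω | W ω = w ∧ xor (W ω) (G ω) = w'}
    have hA : μ {ω | xor (W ω) (Z₁ ω) = x ∧ xor (W ω) (Z₂ ω) = y ∧ W ω = w ∧
        xor (W ω) (G ω) = w'} = ENNReal.ofReal (∑ t : B4,
          if (xor t.1 t.2.1, xor t.1 t.2.2.1, t.1, xor t.1 t.2.2.2) = (x, y, w, w')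
          then Pfun a₁ r t else 0) := by
      rw [show {ω | xor (W ω) (Z₁ ω) = x ∧ xor (W ω) (Z₂ ω) = y ∧ W ω = w ∧
          xor (W ω) (G ω) = w'} =
        (fun ω => (xor (W ω) (Z₁ ω), xor (W ω) (Z₂ ω), W ω, xor (W ω) (G ω)))
          ⁻¹' {(x, y, w, w')} from by ext ω; simp [Prod.ext_iff]]
      exact hprob (fun t : B4 => (xor t.1 t.2.1, xor t.1 t.2.2.1, t.1, xor t.1 t.2.2.2))
        (x, y, w, w')
    have hB : μ {ω | W ω = w} = ENNReal.ofReal (∑ t : B4,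
        if t.1 = w then Pfun a₁ r t else 0) := hprob (fun t : B4 => t.1) w
    have hC : μ {ω | xor (W ω) (Z₁ ω) = x ∧ xor (W ω) (Z₂ ω) = y ∧ W ω = w} =
        ENNReal.ofReal (∑ t : B4,
          if (xor t.1 t.2.1, xor t.1 t.2.2.1, t.1) = (x, y, w) then Pfun a₁ r t else 0) := by
      rw [show {ω | xor (W ω) (Z₁ ω) = x ∧ xor (W ω) (Z₂ ω) = y ∧ W ω = w} =
        (fun ω => (xor (W ω) (Z₁ ω), xor (W ω) (Z₂ ω), W ω)) ⁻¹' {(x, y, w)} from by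
          ext ω; simp [Prod.ext_iff]]
      exact hprob (fun t : B4 => (xor t.1 t.2.1, xor t.1 t.2.2.1, t.1)) (x, y, w)
    have hD : μ {ω | W ω = w ∧ xor (W ω) (G ω) = w'} = ENNReal.ofReal (∑ t : B4,
        if (t.1, xor t.1 t.2.2.2) = (w, w') then Pfun a₁ r t else 0) := by
      rw [show {ω | W ω = w ∧ xor (W ω) (G ω) = w'} =
        (fun ω => (W ω, xor (W ω) (G ω))) ⁻¹' {(w, w')} from by ext ω; simp [Prod.ext_iff]]
      exact hprob (fun t : B4 => (t.1, xor t.1 t.2.2.2)) (w, w')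
    rw [hA, hB, hC, hD, ← ENNReal.ofReal_mul (hsumnn _ _), ← ENNReal.ofReal_mul (hsumnn _ _)]
    refine congrArg ENNReal.ofReal ?_
    cases x <;> cases y <;> cases w <;> cases w' <;>
      · simp [Pfun, Fintype.sum_prod_type, Fintype.sum_bool]
        ring
  · -- mutual information
    show measMI μ (fun ω => (xor (W ω) (Z₁ ω), xor (W ω) (Z₂ ω))) (fun ω => xor (W ω) (G ω)) =
      (1 - 2 * a₁ * (1 - a₁)) * (Real.log 2 -
        binEnt ((a₁ * (1 - r) + r * (1 - a₁) - 2 * a₁ * (1 - a₁) / 2) / (1 - 2 * a₁ * (1 - a₁))))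
    unfold measMI
    beta_reduce
    rw [hXY, hW'ent, hXYW',
      show a₁ * (1 - r) + r * (1 - a₁) - 2 * a₁ * (1 - a₁) / 2 =
        (1-r)*(a₁*a₁) + r*((1-a₁)*(1-a₁)) from by ring]
    have := mi_eval (a0 := 2*a₁*(1-a₁)) ha0pos hs0pos hs1pos hsum
    linarith [this]
  · -- H[X | W']
    show measCondEnt μ (fun ω => xor (W ω) (Z₁ ω)) (fun ω => xor (W ω) (G ω)) =
      binEnt (a₁ * (1 - r) + r * (1 - a₁))
    unfold measCondEnt
    beta_reduce
    rw [hXW', hW'ent]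
    linarith [condEnt_eval hβ0 hβ1]
  · -- H[Y | W']
    show measCondEnt μ (fun ω => xor (W ω) (Z₂ ω)) (fun ω => xor (W ω) (G ω)) =
      binEnt (a₁ * (1 - r) + r * (1 - a₁))
    unfold measCondEnt
    beta_reduce
    rw [hYW', hW'ent]
    linarith [condEnt_eval hβ0 hβ1]
end

section
/- (Wyner common information of the doubly symmetric binary source, point G.) Let a₁ ∈ (0, 1/2). Let W, Z₁, Z₂ be jointly independent Boolean random variables with W uniform and Z₁, Z₂ ~ Bernoulli(a₁), and define X = W ⊕ Z₁, Y = W ⊕ Z₂. Then (i) X and Y are conditionally independent given W; (ii) (X,Y) is a doubly symmetric binary source with P(X ≠ Y) = a₀ where a₀ = 2a₁(1−a₁), i.e. P(X = x, Y = y) = (1−a₀)/2 if x = y and a₀/2 otherwise; and (iii) the mutual information in nats equals I[(X,Y) : W] = ln 2 + h(a₀) − 2h(a₁), where h(p) = −p ln p − (1−p) ln(1−p). -/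
open MeasureTheory ProbabilityTheory

/-- Wyner common information of the DSBS, point G: with `W` uniform and
`Z₁, Z₂ ~ Ber(a₁)` jointly independent, `X = W ⊕ Z₁`, `Y = W ⊕ Z₂`, `a₀ = 2a₁(1−a₁)`:
(i) `X` and `Y` are conditionally independent given `W`; (ii) `(X,Y)` is a doubly
symmetric binary source with `P(X = x, Y = y) = (1−a₀)/2` if `x = y` and `a₀/2` otherwise;
(iii) `I[(X,Y) : W] = ln 2 + h(a₀) − 2h(a₁)` in nats. -/
theorem wyner_common_information_DSBS {Ω : Type*} [MeasurableSpace Ω] (μ : Measure Ω)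
    [IsProbabilityMeasure μ] (a₁ : ℝ) (ha₁0 : 0 < a₁) (ha₁ : a₁ < 1 / 2)
    (W Z₁ Z₂ : Ω → Bool) (hWm : Measurable W) (hZ₁m : Measurable Z₁)
    (hZ₂m : Measurable Z₂)
    (hindep : iIndepFun ![W, Z₁, Z₂] μ)
    (hW : μ (W ⁻¹' {true}) = 1 / 2)
    (hZ₁ : μ (Z₁ ⁻¹' {true}) = ENNReal.ofReal a₁)
    (hZ₂ : μ (Z₂ ⁻¹' {true}) = ENNReal.ofReal a₁) :
    let X : Ω → Bool := fun ω => xor (W ω) (Z₁ ω)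
    let Y : Ω → Bool := fun ω => xor (W ω) (Z₂ ω)
    let a₀ : ℝ := 2 * a₁ * (1 - a₁)
    -- (i) conditional independence of `X` and `Y` given `W`:
    (∀ x y w : Bool,
        μ {ω | X ω = x ∧ Y ω = y ∧ W ω = w} * μ {ω | W ω = w} =
          μ {ω | X ω = x ∧ W ω = w} * μ {ω | Y ω = y ∧ W ω = w}) ∧
      -- (ii) `(X,Y)` is a doubly symmetric binary source with crossover `a₀`:
      (∀ x y : Bool,
        μ {ω | X ω = x ∧ Y ω = y} =
          ENNReal.ofReal (if x = y then (1 - a₀) / 2 else a₀ / 2)) ∧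
      -- (iii) the Wyner common information at point G:
      measMI μ (fun ω => (X ω, Y ω)) W = Real.log 2 + binEnt a₀ - 2 * binEnt a₁ := by
  intro X Y a₀
  have hb0 : (0:ℝ) < 1 - a₁ := by linarith
  set r : Bool → ℝ := fun z => if z then a₁ else 1 - a₁ with hrdef
  have hr_pos : ∀ z, 0 < r z := by intro z; cases z <;> simp [r] <;> linarith
  -- marginals
  have hZfalse : ∀ (Z : Ω → Bool), Measurable Z → μ (Z ⁻¹' {true}) = ENNReal.ofReal a₁ →
      μ (Z ⁻¹' {false}) = ENNReal.ofReal (1 - a₁) := by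
    intro Z hZm h
    have hc : Z ⁻¹' {false} = (Z ⁻¹' {true})ᶜ := by
      ext ω; simp [Set.mem_preimage]
    rw [hc, prob_compl_eq_one_sub (hZm (measurableSet_singleton true)), h,
      ← ENNReal.ofReal_one, ← ENNReal.ofReal_sub _ ha₁0.le]
  have hZ1 : ∀ z, μ (Z₁ ⁻¹' {z}) = ENNReal.ofReal (r z) := by
    intro z; cases z
    · simpa [r] using hZfalse Z₁ hZ₁m hZ₁
    · simpa [r] using hZ₁
  have hZ2 : ∀ z, μ (Z₂ ⁻¹' {z}) = ENNReal.ofReal (r z) := by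
    intro z; cases z
    · simpa [r] using hZfalse Z₂ hZ₂m hZ₂
    · simpa [r] using hZ₂
  have hWall : ∀ w, μ (W ⁻¹' {w}) = ENNReal.ofReal (1/2) := by
    intro w; cases w
    · have hc : W ⁻¹' {false} = (W ⁻¹' {true})ᶜ := by ext ω; simp [Set.mem_preimage]
      rw [hc, prob_compl_eq_one_sub (hWm (measurableSet_singleton true)), hW]
      rw [ENNReal.ofReal_div_of_pos (by norm_num), ENNReal.ofReal_one, ENNReal.ofReal_ofNat]
      simp [ENNReal.sub_half]
    · rw [hW, ENNReal.ofReal_div_of_pos (by norm_num), ENNReal.ofReal_one, ENNReal.ofReal_ofNat]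
  -- atoms
  have hatom : ∀ w z1 z2 : Bool, μ (W ⁻¹' {w} ∩ Z₁ ⁻¹' {z1} ∩ Z₂ ⁻¹' {z2})
      = ENNReal.ofReal (1/2 * (r z1 * r z2)) := by
    intro w z1 z2
    have hsets : ∀ i : Fin 3,
        MeasurableSet[(fun _ : Fin 3 => (inferInstance : MeasurableSpace Bool)) i |>.comap
          (![W, Z₁, Z₂] i)] ((![W, Z₁, Z₂] i) ⁻¹' {(![w, z1, z2] i)}) :=
      fun i => ⟨{![w, z1, z2] i}, measurableSet_singleton _, rfl⟩
    have := hindep.meas_iInter hsets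
    have hI : (⋂ i, (![W, Z₁, Z₂] i) ⁻¹' {(![w, z1, z2] i)}) =
        W ⁻¹' {w} ∩ Z₁ ⁻¹' {z1} ∩ Z₂ ⁻¹' {z2} := by
      ext ω
      simp [Set.mem_iInter, Fin.forall_fin_succ, Matrix.cons_val_zero, Matrix.cons_val_one,
        and_assoc]
    rw [hI] at this
    rw [this, Fin.prod_univ_three]
    simp only [Matrix.cons_val_zero, Matrix.cons_val_one, Matrix.head_cons,
      Matrix.cons_val_two, Matrix.tail_cons]
    rw [hWall w, hZ1 z1, hZ2 z2, ← ENNReal.ofReal_mul (by norm_num),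
      ← ENNReal.ofReal_mul (by positivity)]
    ring_nf
  have hbool3 : ∀ (a b c x y w : Bool),
      (xor a b = x ∧ xor a c = y ∧ a = w) ↔ (a = w ∧ b = xor x w ∧ c = xor y w) := by decide
  have hbool2 : ∀ (a b x w : Bool), (xor a b = x ∧ a = w) ↔ (a = w ∧ b = xor x w) := by decide
  have hboolXY : ∀ (a b c x y : Bool), (xor a b = x ∧ xor a c = y) ↔
      ((a = false ∧ b = xor x false ∧ c = xor y false) ∨
       (a = true ∧ b = xor x true ∧ c = xor y true)) := by decide
  have hset3 : ∀ x y w : Bool, {ω | X ω = x ∧ Y ω = y ∧ W ω = w} =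
      W ⁻¹' {w} ∩ Z₁ ⁻¹' {xor x w} ∩ Z₂ ⁻¹' {xor y w} := by
    intro x y w
    ext ω
    simp only [X, Y, Set.mem_setOf_eq, Set.mem_inter_iff, Set.mem_preimage,
      Set.mem_singleton_iff, and_assoc]
    exact hbool3 (W ω) (Z₁ ω) (Z₂ ω) x y w
  have hmu3 : ∀ x y w : Bool, μ {ω | X ω = x ∧ Y ω = y ∧ W ω = w} =
      ENNReal.ofReal (1/2 * (r (xor x w) * r (xor y w))) := by
    intro x y w; rw [hset3, hatom]
  have hWZ1 : IndepFun W Z₁ μ := hindep.indepFun (i := 0) (j := 1) (by decide)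
  have hWZ2 : IndepFun W Z₂ μ := hindep.indepFun (i := 0) (j := 2) (by decide)
  have hmuXW : ∀ x w : Bool, μ {ω | X ω = x ∧ W ω = w} =
      ENNReal.ofReal (1/2 * r (xor x w)) := by
    intro x w
    have hs : {ω | X ω = x ∧ W ω = w} = W ⁻¹' {w} ∩ Z₁ ⁻¹' {xor x w} := by
      ext ω
      simp only [X, Set.mem_setOf_eq, Set.mem_inter_iff, Set.mem_preimage,
        Set.mem_singleton_iff]
      exact hbool2 (W ω) (Z₁ ω) x w
    rw [hs, hWZ1.measure_inter_preimage_eq_mul _ _ (measurableSet_singleton _)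
      (measurableSet_singleton _), hWall, hZ1, ← ENNReal.ofReal_mul (by norm_num)]
  have hmuYW : ∀ y w : Bool, μ {ω | Y ω = y ∧ W ω = w} =
      ENNReal.ofReal (1/2 * r (xor y w)) := by
    intro y w
    have hs : {ω | Y ω = y ∧ W ω = w} = W ⁻¹' {w} ∩ Z₂ ⁻¹' {xor y w} := by
      ext ω
      simp only [Y, Set.mem_setOf_eq, Set.mem_inter_iff, Set.mem_preimage,
        Set.mem_singleton_iff]
      exact hbool2 (W ω) (Z₂ ω) y w
    rw [hs, hWZ2.measure_inter_preimage_eq_mul _ _ (measurableSet_singleton _)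
      (measurableSet_singleton _), hWall, hZ2, ← ENNReal.ofReal_mul (by norm_num)]
  have hmuW : ∀ w : Bool, μ {ω | W ω = w} = ENNReal.ofReal (1/2) := fun w => hWall w
  -- part (ii) measure values
  have hmuXY : ∀ x y : Bool, μ {ω | X ω = x ∧ Y ω = y} =
      ENNReal.ofReal (1/2 * (r x * r y) + 1/2 * (r (!x) * r (!y))) := by
    intro x y
    have hs : {ω | X ω = x ∧ Y ω = y} =
        (W ⁻¹' {false} ∩ Z₁ ⁻¹' {xor x false} ∩ Z₂ ⁻¹' {xor y false}) ∪
        (W ⁻¹' {true} ∩ Z₁ ⁻¹' {xor x true} ∩ Z₂ ⁻¹' {xor y true}) := by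
      ext ω
      simp only [X, Y, Set.mem_setOf_eq, Set.mem_union, Set.mem_inter_iff, Set.mem_preimage,
        Set.mem_singleton_iff, and_assoc]
      exact hboolXY (W ω) (Z₁ ω) (Z₂ ω) x y
    have hdisj : Disjoint
        (W ⁻¹' {false} ∩ Z₁ ⁻¹' {xor x false} ∩ Z₂ ⁻¹' {xor y false})
        (W ⁻¹' {true} ∩ Z₁ ⁻¹' {xor x true} ∩ Z₂ ⁻¹' {xor y true}) := by
      refine Set.disjoint_left.mpr ?_
      rintro ω ⟨⟨h1, -⟩, -⟩ ⟨⟨h2, -⟩, -⟩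
      exact Bool.false_ne_true (h1 ▸ h2)
    have hm2 : MeasurableSet
        (W ⁻¹' {true} ∩ Z₁ ⁻¹' {xor x true} ∩ Z₂ ⁻¹' {xor y true}) :=
      ((hWm (measurableSet_singleton _)).inter (hZ₁m (measurableSet_singleton _))).inter
        (hZ₂m (measurableSet_singleton _))
    rw [hs, measure_union hdisj hm2, hatom, hatom,
      ← ENNReal.ofReal_add (by positivity) (by positivity)]
    simp [Bool.xor_false, Bool.xor_true]
  have hii : ∀ x y : Bool,
      μ {ω | X ω = x ∧ Y ω = y} =
        ENNReal.ofReal (if x = y then (1 - a₀) / 2 else a₀ / 2) := by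
    intro x y
    rw [hmuXY]
    congr 1
    cases x <;> cases y <;> (try simp [r, a₀]) <;> ring
  have ha₀0 : (0:ℝ) < a₀ := by
    have := mul_pos ha₁0 hb0; simp only [a₀]; nlinarith
  have ha₀half : a₀ < 1/2 := by
    have h := mul_pos (show (0:ℝ) < 1 - 2*a₁ by linarith) (show (0:ℝ) < 1 - 2*a₁ by linarith)
    simp only [a₀]; nlinarith
  have ha₀1 : (0:ℝ) < 1 - a₀ := by linarith
  -- log decompositions
  have hlog2 : Real.log ((1:ℝ)/2) = - Real.log 2 := by
    rw [one_div, Real.log_inv]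
  have hl1 : Real.log ((1 - a₀)/2) = Real.log (1 - a₀) - Real.log 2 :=
    Real.log_div (ne_of_gt ha₀1) two_ne_zero
  have hl2 : Real.log (a₀/2) = Real.log a₀ - Real.log 2 :=
    Real.log_div (ne_of_gt ha₀0) two_ne_zero
  have hl3 : Real.log a₀ = Real.log 2 + Real.log a₁ + Real.log (1 - a₁) := by
    rw [show a₀ = 2*(a₁*(1-a₁)) by simp only [a₀]; ring,
      Real.log_mul two_ne_zero (by positivity),
      Real.log_mul (ne_of_gt ha₁0) (ne_of_gt hb0)]
    ring
  have hl4 : Real.log (1/2*(a₁*a₁)) = Real.log a₁ + Real.log a₁ - Real.log 2 := by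
    rw [show (1:ℝ)/2*(a₁*a₁) = a₁*a₁/2 by ring, Real.log_div (by positivity) two_ne_zero,
      Real.log_mul (ne_of_gt ha₁0) (ne_of_gt ha₁0)]
  have hl5 : Real.log (1/2*(a₁*(1-a₁))) = Real.log a₁ + Real.log (1-a₁) - Real.log 2 := by
    rw [show (1:ℝ)/2*(a₁*(1-a₁)) = a₁*(1-a₁)/2 by ring,
      Real.log_div (by positivity) two_ne_zero,
      Real.log_mul (ne_of_gt ha₁0) (ne_of_gt hb0)]
  have hl6 : Real.log (1/2*((1-a₁)*(1-a₁))) = Real.log (1-a₁) + Real.log (1-a₁) - Real.log 2 := by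
    rw [show (1:ℝ)/2*((1-a₁)*(1-a₁)) = (1-a₁)*(1-a₁)/2 by ring,
      Real.log_div (by positivity) two_ne_zero,
      Real.log_mul (ne_of_gt hb0) (ne_of_gt hb0)]
  -- entropies
  have hEW : measEnt μ W = Real.log 2 := by
    rw [measEnt, Fintype.sum_bool, hWall, hWall, ENNReal.toReal_ofReal (by norm_num)]
    simp only [Real.negMulLog]
    rw [hlog2]; ring
  have hEXY : measEnt μ (fun ω => (X ω, Y ω)) = Real.log 2 + binEnt a₀ := by
    have hpre : ∀ p : Bool × Bool,
        ((fun ω => (X ω, Y ω)) ⁻¹' {p}) = {ω | X ω = p.1 ∧ Y ω = p.2} := by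
      intro p; ext ω; simp [Prod.ext_iff]
    have hval : ∀ p : Bool × Bool,
        (μ ((fun ω => (X ω, Y ω)) ⁻¹' {p})).toReal =
          if p.1 = p.2 then (1 - a₀)/2 else a₀/2 := by
      intro p
      rw [hpre, hii p.1 p.2, ENNReal.toReal_ofReal (by split <;> linarith)]
    rw [measEnt]
    simp only [hval]
    rw [Fintype.sum_prod_type, Fintype.sum_bool, Fintype.sum_bool, Fintype.sum_bool]
    simp only [if_true, reduceIte, Bool.true_eq_false, Bool.false_eq_true]
    simp only [Real.negMulLog, binEnt]
    rw [hl1, hl2]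
    ring
  have hEJ : measEnt μ (fun ω => ((X ω, Y ω), W ω)) = Real.log 2 + 2 * binEnt a₁ := by
    have hpre : ∀ p : (Bool × Bool) × Bool,
        ((fun ω => ((X ω, Y ω), W ω)) ⁻¹' {p}) =
          {ω | X ω = p.1.1 ∧ Y ω = p.1.2 ∧ W ω = p.2} := by
      intro p; ext ω; simp [Prod.ext_iff, and_assoc]
    have hval : ∀ p : (Bool × Bool) × Bool,
        (μ ((fun ω => ((X ω, Y ω), W ω)) ⁻¹' {p})).toReal =
          1/2 * (r (xor p.1.1 p.2) * r (xor p.1.2 p.2)) := by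
      intro p
      rw [hpre, hmu3, ENNReal.toReal_ofReal
        (by have := hr_pos (xor p.1.1 p.2); have := hr_pos (xor p.1.2 p.2); positivity)]
    rw [measEnt]
    simp only [hval]
    rw [Fintype.sum_prod_type, Fintype.sum_prod_type, Fintype.sum_bool, Fintype.sum_bool,
      Fintype.sum_bool, Fintype.sum_bool, Fintype.sum_bool, Fintype.sum_bool, Fintype.sum_bool]
    simp only [Bool.xor_false, Bool.xor_true, Bool.not_false, Bool.not_true]
    simp only [r, if_true, reduceIte, Bool.true_eq_false, Bool.false_eq_true]
    have hl5' : Real.log (1/2*((1-a₁)*a₁)) = Real.log a₁ + Real.log (1-a₁) - Real.log 2 := by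
      rw [show (1:ℝ)/2*((1-a₁)*a₁) = 1/2*(a₁*(1-a₁)) by ring]; exact hl5
    simp only [Real.negMulLog, binEnt]
    rw [hl4, hl5, hl5', hl6]
    ring
  refine ⟨?_, hii, ?_⟩
  · intro x y w
    rw [hmu3, hmuW, hmuXW, hmuYW, ← ENNReal.ofReal_mul (by positivity),
      ← ENNReal.ofReal_mul (by positivity)]
    congr 1; ring
  · rw [measMI, hEW, hEXY]
    have : measEnt μ (fun ω => ((fun ω => (X ω, Y ω)) ω, W ω)) =
        measEnt μ (fun ω => ((X ω, Y ω), W ω)) := rfl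
    rw [this, hEJ]
    ring
end
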